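/- Let 0 < k < n be integers, let κ_1 < κ_2 < ⋯ < κ_n be real numbers, and let A be a real k×n matrix of rank k that is totally nonnegative. Then the KP-II tau function τ(x,y,t) of the data (κ, A) is strictly positive for all real (x,y,t). -/

import Mathlib

open scoped BigOperators

/-- The maximal minor `Δ_I(A)` of a real `k × n` matrix `A` on the column set `I`
(columns taken in increasing order); junk value `0` if `I` does not have `k` elements. -/
noncomputable def kpMinor (k n : ℕ) (A : Matrix (Fin k) (Fin n) ℝ) (I : Finset (Fin n)) : ℝ :=
  if h : I.card = k then (A.submatrix id fun a => I.orderEmbOfFin h a).det else 0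

/-- `A` is totally nonnegative: all maximal minors are nonnegative. -/
def TotallyNonneg (k n : ℕ) (A : Matrix (Fin k) (Fin n) ℝ) : Prop :=
  ∀ I : Finset (Fin n), I.card = k → 0 ≤ kpMinor k n A I

/-- The Vandermonde factor `∏_{a<b} (κ_{i_b} - κ_{i_a})` attached to a `k`-element
column set `I = {i_1 < ⋯ < i_k}`. -/
noncomputable def kpVdm (k n : ℕ) (κ : Fin n → ℝ) (I : Finset (Fin n)) : ℝ :=
  if h : I.card = k then
    ∏ p ∈ Finset.univ.filter fun p : Fin k × Fin k => p.1 < p.2,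
      (κ (I.orderEmbOfFin h p.2) - κ (I.orderEmbOfFin h p.1))
  else 0

/-- The KP-II tau function of the data `(κ, A)`:
`τ(x,y,t) = Σ_I Δ_I(A) ∏_{a<b}(κ_{i_b}-κ_{i_a}) exp(Σ_{i∈I} (κ_i x + κ_i² y + κ_i³ t))`. -/
noncomputable def kpTau (k n : ℕ) (κ : Fin n → ℝ) (A : Matrix (Fin k) (Fin n) ℝ)
    (x y t : ℝ) : ℝ :=
  ∑ I ∈ Finset.powersetCard k (Finset.univ : Finset (Fin n)),
    kpMinor k n A I * kpVdm k n κ I *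
      Real.exp (∑ i ∈ I, (κ i * x + κ i ^ 2 * y + κ i ^ 3 * t))

open Matrix in
lemma exists_minor_ne_zero (k n : ℕ) (A : Matrix (Fin k) (Fin n) ℝ) (hrank : A.rank = k) :
    ∃ I : Finset (Fin n), ∃ h : I.card = k,
      (A.submatrix id fun a => I.orderEmbOfFin h a).det ≠ 0 := by
  classical
  have hspan : Submodule.span ℝ (Set.range Aᵀ) = ⊤ := by
    have h1 : Module.finrank ℝ (Submodule.span ℝ (Set.range Aᵀ)) = k := by
      exact (Matrix.rank_eq_finrank_span_cols A).symm.trans hrank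
    apply Submodule.eq_top_of_finrank_eq
    rw [h1, Module.finrank_fintype_fun_eq_card, Fintype.card_fin]
  obtain ⟨b, hb_sub, hb_span, hb_li⟩ := exists_linearIndependent ℝ (Set.range Aᵀ)
  have hbfin : b.Finite := (Set.finite_range Aᵀ).subset hb_sub
  haveI : Fintype b := hbfin.fintype
  have hcard : Fintype.card b = k := by
    have := finrank_span_set_eq_card hb_li
    rw [hb_span, hspan] at this
    rw [← Set.toFinset_card]
    rw [Set.toFinset_card] at this ⊢
    rw [← this, finrank_top, Module.finrank_fintype_fun_eq_card, Fintype.card_fin]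
  -- pick indices
  have hpick : ∀ v : b, ∃ i : Fin n, Aᵀ i = (v : Fin k → ℝ) := fun v => hb_sub v.2
  choose g hg using hpick
  have hginj : Function.Injective g := by
    intro v w hvw
    apply Subtype.ext
    rw [← hg v, ← hg w, hvw]
  set I : Finset (Fin n) := Finset.univ.image g with hI
  have hIcard : I.card = k := by
    rw [hI, Finset.card_image_of_injective _ hginj, Finset.card_univ, hcard]
  refine ⟨I, hIcard, ?_⟩
  set e := I.orderEmbOfFin hIcard with he
  -- A is injective on I (as column map)
  have hAinj : ∀ i ∈ I, ∀ j ∈ I, Aᵀ i = Aᵀ j → i = j := by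
    intro i hi j hj hij
    obtain ⟨v, -, rfl⟩ := Finset.mem_image.1 hi
    obtain ⟨w, -, rfl⟩ := Finset.mem_image.1 hj
    rw [hg v, hg w] at hij
    exact congrArg g (Subtype.ext hij)
  -- columns of submatrix are linearly independent
  have hmem : ∀ a : Fin k, Aᵀ (e a) ∈ b := by
    intro a
    have : e a ∈ I := I.orderEmbOfFin_mem hIcard a
    obtain ⟨v, -, hv⟩ := Finset.mem_image.1 this
    rw [← hv, hg v]; exact v.2
  set h : Fin k → b := fun a => ⟨Aᵀ (e a), hmem a⟩ with hh
  have hhinj : Function.Injective h := by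
    intro a a' haa
    have : Aᵀ (e a) = Aᵀ (e a') := congrArg Subtype.val haa
    have := hAinj _ (I.orderEmbOfFin_mem hIcard a) _ (I.orderEmbOfFin_mem hIcard a') this
    exact e.injective this
  have hli2 : LinearIndependent ℝ (fun a : Fin k => Aᵀ (e a)) := by
    have := hb_li.comp h hhinj
    exact this
  have hdet : IsUnit (A.submatrix id fun a => e a) := by
    rw [← Matrix.linearIndependent_cols_iff_isUnit]
    exact hli2
  have := (Matrix.isUnit_iff_isUnit_det _).mp hdet
  exact this.ne_zero

/-- for `0 < k < n`, strictly increasing real phases `κ₁ < ⋯ < κ_n`,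
and a totally nonnegative real `k × n` matrix `A` of rank `k`, the KP-II tau function of
`(κ, A)` is strictly positive at every real `(x,y,t)`. -/
theorem kpTau_pos (k n : ℕ) (hk : 0 < k) (hkn : k < n)
    (κ : Fin n → ℝ) (hκ : StrictMono κ)
    (A : Matrix (Fin k) (Fin n) ℝ) (hrank : A.rank = k) (hA : TotallyNonneg k n A) :
    ∀ x y t : ℝ, 0 < kpTau k n κ A x y t := by
  intro x y t
  have hvdm : ∀ I : Finset (Fin n), I.card = k → 0 < kpVdm k n κ I := by
    intro I hI
    rw [kpVdm, dif_pos hI]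
    apply Finset.prod_pos
    intro p hp
    rw [Finset.mem_filter] at hp
    have := (I.orderEmbOfFin hI).strictMono hp.2
    exact sub_pos.mpr (hκ this)
  unfold kpTau
  apply Finset.sum_pos'
  · intro I hI
    rw [Finset.mem_powersetCard_univ] at hI
    have h1 := hA I hI
    have h2 := (hvdm I hI).le
    positivity
  · obtain ⟨I, hIc, hdet⟩ := exists_minor_ne_zero k n A hrank
    refine ⟨I, Finset.mem_powersetCard_univ.mpr hIc, ?_⟩
    have h1 : 0 < kpMinor k n A I := by
      have := hA I hIc
      rw [kpMinor, dif_pos hIc] at this ⊢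
      exact lt_of_le_of_ne this (Ne.symm hdet)
    have h2 := hvdm I hIc
    positivity
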